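/- For 1 ≤ j ≤ n-2 and A = [j-1]∪{j+1}, the hyperplane H: x_1+...+x_j = binom(j+1,2)+1 splits the vertex set of Π_n into Bruhat intervals: the permutations σ with σ(1)+...+σ(j) ≤ binom(j+1,2)+1 form exactly the interval [e, ←A·ω_A], and those with σ(1)+...+σ(j) ≥ binom(j+1,2)+1 form exactly the interval [→A·e_A, ω]. -/

import Mathlib

/-- Number of inversions (Coxeter length) of a permutation of `Fin n`. -/
def invCount {n : ℕ} (σ : Equiv.Perm (Fin n)) : ℕ :=
  ((Finset.univ : Finset (Fin n × Fin n)).filter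
    (fun p => p.1 < p.2 ∧ σ p.2 < σ p.1)).card

/-- Covering relation of the strong Bruhat order: multiply by a transposition
(on values) and increase the length by exactly one. -/
def BruhatCover {n : ℕ} (u v : Equiv.Perm (Fin n)) : Prop :=
  (∃ a b : Fin n, a ≠ b ∧ v = Equiv.swap a b * u) ∧ invCount v = invCount u + 1

/-- The strong Bruhat order on `Equiv.Perm (Fin n)`. -/
def BruhatLE {n : ℕ} : Equiv.Perm (Fin n) → Equiv.Perm (Fin n) → Prop :=
  Relation.ReflTransGen BruhatCover

/-- Sum of the first `j` one-line values of `σ` (values taken in `{1, …, n}`). -/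
def firstSum {n : ℕ} (σ : Equiv.Perm (Fin n)) (j : ℕ) : ℕ :=
  ∑ i ∈ Finset.univ.filter (fun i : Fin n => (i : ℕ) < j), ((σ i : ℕ) + 1)

namespace BruhatAux

open Equiv Finset

variable {n : ℕ}

def invSet (w : Equiv.Perm (Fin n)) : Finset (Fin n × Fin n) :=
  Finset.univ.filter (fun x => x.1 < x.2 ∧ w x.2 < w x.1)

lemma invCount_eq (w : Equiv.Perm (Fin n)) : invCount w = (invSet w).card := rfl

lemma perm_apply_inv_self (u : Equiv.Perm (Fin n)) (a : Fin n) : u (u⁻¹ a) = a :=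
  (Equiv.eq_symm_apply u).mp rfl

def phi (p q : Fin n) (x : Fin n × Fin n) : Fin n × Fin n :=
  if (p < x.1 ∧ x.1 < q) ∨ (p < x.2 ∧ x.2 < q) then x
  else (Equiv.swap p q x.1, Equiv.swap p q x.2)

lemma between_swap (p q a : Fin n) :
    (p < Equiv.swap p q a ∧ Equiv.swap p q a < q) ↔ (p < a ∧ a < q) := by
  rcases eq_or_ne a p with rfl | h1
  · rw [Equiv.swap_apply_left]
    simp [lt_irrefl]
  rcases eq_or_ne a q with rfl | h2
  · rw [Equiv.swap_apply_right]
    simp [lt_irrefl]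
  · rw [Equiv.swap_apply_of_ne_of_ne h1 h2]

lemma phi_invol (p q : Fin n) : Function.Involutive (phi p q) := by
  intro x
  unfold phi
  by_cases h : (p < x.1 ∧ x.1 < q) ∨ (p < x.2 ∧ x.2 < q)
  · rw [if_pos h, if_pos h]
  · rw [if_neg h, if_neg (by
      simp only [between_swap]
      exact h)]
    simp [Equiv.swap_apply_self]

lemma swap_lt {p q a b : Fin n} (hpq : p < q) (hab : a < b)
    (hna : ¬(p < a ∧ a < q)) (hnb : ¬(p < b ∧ b < q)) (hne : ¬(a = p ∧ b = q)) :
    Equiv.swap p q a < Equiv.swap p q b := by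
  rcases lt_trichotomy a p with h1 | rfl | h1
  · rw [Equiv.swap_apply_of_ne_of_ne (ne_of_lt h1) (ne_of_lt (h1.trans hpq))]
    rcases eq_or_ne b p with rfl | hbp
    · rw [Equiv.swap_apply_left]; exact h1.trans hpq
    rcases eq_or_ne b q with rfl | hbq
    · rw [Equiv.swap_apply_right]; exact h1
    · rw [Equiv.swap_apply_of_ne_of_ne hbp hbq]; exact hab
  · rw [Equiv.swap_apply_left]
    have hqb : q < b := by
      rcases lt_or_ge b q with h | h
      · exact absurd ⟨hab, h⟩ hnb
      · rcases h.lt_or_eq with h | rfl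
        · exact h
        · exact absurd ⟨rfl, rfl⟩ hne
    rw [Equiv.swap_apply_of_ne_of_ne (ne_of_gt (hpq.trans hqb)) (ne_of_gt hqb)]
    exact hqb
  · have hqa : q ≤ a := le_of_not_gt (fun h => hna ⟨h1, h⟩)
    have hqb : q < b := lt_of_le_of_lt hqa hab
    rw [Equiv.swap_apply_of_ne_of_ne (ne_of_gt (hpq.trans hqb)) (ne_of_gt hqb)]
    rcases eq_or_ne a q with rfl | haq
    · rw [Equiv.swap_apply_right]; exact hpq.trans hqb
    · rw [Equiv.swap_apply_of_ne_of_ne (ne_of_gt h1) haq]; exact hab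

lemma phi_mem_fwd {u : Equiv.Perm (Fin n)} {p q a b : Fin n} (hpq : p < q) (hval : u p < u q)
    (hab : a < b) (hinv : u b < u a) :
    (phi p q (a, b)).1 < (phi p q (a, b)).2 ∧
      u (Equiv.swap p q (phi p q (a, b)).2) < u (Equiv.swap p q (phi p q (a, b)).1) := by
  unfold phi
  by_cases hc : (p < (a, b).1 ∧ (a, b).1 < q) ∨ (p < (a, b).2 ∧ (a, b).2 < q)
  · rw [if_pos hc]
    refine ⟨hab, ?_⟩
    rcases hc with ⟨hpa, haq⟩ | ⟨hpb, hbq⟩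
    · have ha1 : a ≠ p := ne_of_gt hpa
      have ha2 : a ≠ q := ne_of_lt haq
      have hbp : b ≠ p := ne_of_gt (hpa.trans hab)
      rcases eq_or_ne b q with rfl | hbq
      · rw [Equiv.swap_apply_right, Equiv.swap_apply_of_ne_of_ne ha1 ha2]
        exact hval.trans hinv
      · rw [Equiv.swap_apply_of_ne_of_ne hbp hbq, Equiv.swap_apply_of_ne_of_ne ha1 ha2]
        exact hinv
    · have hb1 : b ≠ p := ne_of_gt hpb
      have hb2 : b ≠ q := ne_of_lt hbq
      have haq : a ≠ q := ne_of_lt (hab.trans hbq)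
      rcases eq_or_ne a p with rfl | hap
      · rw [Equiv.swap_apply_left, Equiv.swap_apply_of_ne_of_ne hb1 hb2]
        exact hinv.trans hval
      · rw [Equiv.swap_apply_of_ne_of_ne hb1 hb2, Equiv.swap_apply_of_ne_of_ne hap haq]
        exact hinv
  · rw [if_neg hc]
    have hc1 : ¬(p < a ∧ a < q) := fun h => hc (Or.inl h)
    have hc2 : ¬(p < b ∧ b < q) := fun h => hc (Or.inr h)
    have hne : ¬(a = p ∧ b = q) := by
      rintro ⟨rfl, rfl⟩
      exact absurd hinv (asymm hval)
    refine ⟨swap_lt hpq hab hc1 hc2 hne, ?_⟩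
    simp only [Equiv.swap_apply_self]
    exact hinv

lemma phi_mem_bwd {u : Equiv.Perm (Fin n)} {p q a b : Fin n} (hpq : p < q) (hval : u p < u q)
    (hmid : ∀ r : Fin n, p < r → r < q → u r < u p ∨ u q < u r)
    (hab : a < b) (hinv : u (Equiv.swap p q b) < u (Equiv.swap p q a))
    (hne : ¬(a = p ∧ b = q)) :
    (phi p q (a, b)).1 < (phi p q (a, b)).2 ∧
      u (phi p q (a, b)).2 < u (phi p q (a, b)).1 := by
  unfold phi
  by_cases hc : (p < (a, b).1 ∧ (a, b).1 < q) ∨ (p < (a, b).2 ∧ (a, b).2 < q)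
  · rw [if_pos hc]
    refine ⟨hab, ?_⟩
    rcases hc with ⟨hpa, haq⟩ | ⟨hpb, hbq⟩
    · have ha1 : a ≠ p := ne_of_gt hpa
      have ha2 : a ≠ q := ne_of_lt haq
      have hbp : b ≠ p := ne_of_gt (hpa.trans hab)
      rw [Equiv.swap_apply_of_ne_of_ne ha1 ha2] at hinv
      rcases eq_or_ne b q with rfl | hbq
      · rw [Equiv.swap_apply_right] at hinv
        rcases hmid a hpa haq with h | h
        · exact absurd hinv (asymm h)
        · exact h
      · rwa [Equiv.swap_apply_of_ne_of_ne hbp hbq] at hinv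
    · have hb1 : b ≠ p := ne_of_gt hpb
      have hb2 : b ≠ q := ne_of_lt hbq
      have haq : a ≠ q := ne_of_lt (hab.trans hbq)
      rw [Equiv.swap_apply_of_ne_of_ne hb1 hb2] at hinv
      rcases eq_or_ne a p with rfl | hap
      · rw [Equiv.swap_apply_left] at hinv
        rcases hmid b hpb hbq with h | h
        · exact h
        · exact absurd hinv (asymm h)
      · rwa [Equiv.swap_apply_of_ne_of_ne hap haq] at hinv
  · rw [if_neg hc]
    have hc1 : ¬(p < a ∧ a < q) := fun h => hc (Or.inl h)
    have hc2 : ¬(p < b ∧ b < q) := fun h => hc (Or.inr h)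
    exact ⟨swap_lt hpq hab hc1 hc2 hne, hinv⟩

lemma phi_pq (p q : Fin n) (hpq : p < q) : phi p q (p, q) = (q, p) := by
  unfold phi
  rw [if_neg (by simp [lt_irrefl])]
  simp [Equiv.swap_apply_left, Equiv.swap_apply_right]

lemma invCount_lt_swap (u : Equiv.Perm (Fin n)) (p q : Fin n) (hpq : p < q)
    (hval : u p < u q) :
    invCount u + 1 ≤ invCount (u * Equiv.swap p q) := by
  rw [invCount_eq, invCount_eq]
  have hsub : insert (p, q) ((invSet u).image (phi p q)) ⊆ invSet (u * Equiv.swap p q) := by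
    intro x hx
    rcases Finset.mem_insert.1 hx with rfl | hx
    · simp only [invSet, Finset.mem_filter, Finset.mem_univ, true_and]
      refine ⟨hpq, ?_⟩
      simp only [Equiv.Perm.mul_apply, Equiv.swap_apply_left, Equiv.swap_apply_right]
      exact hval
    · obtain ⟨⟨a, b⟩, hy, rfl⟩ := Finset.mem_image.1 hx
      simp only [invSet, Finset.mem_filter, Finset.mem_univ, true_and] at hy ⊢
      simp only [Equiv.Perm.mul_apply]
      exact phi_mem_fwd hpq hval hy.1 hy.2
  have hnotmem : (p, q) ∉ (invSet u).image (phi p q) := by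
    intro hmem
    obtain ⟨y, hy, hphi⟩ := Finset.mem_image.1 hmem
    have : y = phi p q (p, q) := by
      rw [← hphi, phi_invol]
    rw [phi_pq p q hpq] at this
    subst this
    simp only [invSet, Finset.mem_filter, Finset.mem_univ, true_and] at hy
    exact absurd hy.1 (asymm hpq)
  calc (invSet u).card + 1
      = ((invSet u).image (phi p q)).card + 1 := by
        rw [Finset.card_image_of_injective _ (phi_invol p q).injective]
    _ = (insert (p, q) ((invSet u).image (phi p q))).card := by
        rw [Finset.card_insert_of_notMem hnotmem]
    _ ≤ (invSet (u * Equiv.swap p q)).card := Finset.card_le_card hsub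

lemma invCount_swap_eq (u : Equiv.Perm (Fin n)) (p q : Fin n) (hpq : p < q)
    (hval : u p < u q)
    (hmid : ∀ r : Fin n, p < r → r < q → u r < u p ∨ u q < u r) :
    invCount (u * Equiv.swap p q) = invCount u + 1 := by
  refine le_antisymm ?_ (invCount_lt_swap u p q hpq hval)
  rw [invCount_eq, invCount_eq]
  have hsub : invSet (u * Equiv.swap p q) ⊆ insert (p, q) ((invSet u).image (phi p q)) := by
    rintro ⟨a, b⟩ hx
    rw [invSet, Finset.mem_filter] at hx
    simp only [invSet, Finset.mem_filter, Finset.mem_univ, true_and,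
      Equiv.Perm.mul_apply] at hx
    by_cases hne : a = p ∧ b = q
    · obtain ⟨rfl, rfl⟩ := hne
      exact Finset.mem_insert_self _ _
    · refine Finset.mem_insert_of_mem (Finset.mem_image.2 ⟨phi p q (a, b), ?_, phi_invol p q _⟩)
      simp only [invSet, Finset.mem_filter, Finset.mem_univ, true_and]
      exact phi_mem_bwd hpq hval hmid hx.1 hx.2 hne
  calc (invSet (u * Equiv.swap p q)).card
      ≤ (insert (p, q) ((invSet u).image (phi p q))).card := Finset.card_le_card hsub
    _ ≤ ((invSet u).image (phi p q)).card + 1 := Finset.card_insert_le _ _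
    _ ≤ (invSet u).card + 1 := by
        exact Nat.add_le_add_right (Finset.card_image_le) 1

lemma bruhatCover_swap (u : Equiv.Perm (Fin n)) (p q : Fin n) (hpq : p < q)
    (hval : u p < u q)
    (hmid : ∀ r : Fin n, p < r → r < q → u r < u p ∨ u q < u r) :
    BruhatCover u (u * Equiv.swap p q) := by
  refine ⟨⟨u p, u q, ?_, ?_⟩, invCount_swap_eq u p q hpq hval hmid⟩
  · exact ne_of_lt hval
  · exact Equiv.mul_swap_eq_swap_mul u p q

def fval (σ : Equiv.Perm (Fin n)) (i : ℕ) : ℕ :=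
  if h : i < n then (σ ⟨i, h⟩ : ℕ) else 0

lemma fval_apply (σ : Equiv.Perm (Fin n)) (i : ℕ) (h : i < n) :
    fval σ i = (σ ⟨i, h⟩ : ℕ) := dif_pos h

lemma fval_lt (σ : Equiv.Perm (Fin n)) (i : ℕ) (h : i < n) : fval σ i < n := by
  rw [fval_apply σ i h]; exact (σ ⟨i, h⟩).isLt

lemma fval_inj (σ : Equiv.Perm (Fin n)) {a b : ℕ} (ha : a < n) (hb : b < n)
    (h : fval σ a = fval σ b) : a = b := by
  rw [fval_apply σ a ha, fval_apply σ b hb] at h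
  have := σ.injective (Fin.ext h)
  exact congrArg Fin.val this

lemma firstSum_eq (σ : Equiv.Perm (Fin n)) {j : ℕ} (hj : j ≤ n) :
    firstSum σ j = ∑ i ∈ Finset.range j, (fval σ i + 1) := by
  unfold firstSum
  rw [Finset.sum_filter]
  have h1 : (∑ a : Fin n, if (a : ℕ) < j then (σ a : ℕ) + 1 else 0) =
      ∑ i ∈ Finset.range n, (if i < j then fval σ i + 1 else 0) := by
    rw [← Fin.sum_univ_eq_sum_range]
    apply Finset.sum_congr rfl
    intro i _
    by_cases h : (i : ℕ) < j
    · rw [if_pos h, if_pos h, fval_apply σ i i.isLt]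
    · rw [if_neg h, if_neg h]
  have h2 : (∑ i ∈ Finset.range j, (if i < j then fval σ i + 1 else 0)) =
      ∑ i ∈ Finset.range n, (if i < j then fval σ i + 1 else 0) := by
    apply Finset.sum_subset (Finset.range_subset_range.2 hj)
    intro x _ hnx
    exact if_neg (by simpa using hnx)
  rw [h1, ← h2]
  apply Finset.sum_congr rfl
  intro i hi
  exact if_pos (Finset.mem_range.1 hi)

lemma chain_up (F : ℕ → ℕ) (lo m : ℕ) (h : ∀ i, lo ≤ i → i + 1 < m → F i < F (i + 1)) :
    ∀ d a, lo ≤ a → a + d < m → F a + d ≤ F (a + d) := by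
  intro d
  induction d with
  | zero => intro a _ _; simp
  | succ d ih =>
    intro a ha hm
    have h1 := ih a ha (by omega)
    have h2 := h (a + d) (by omega) (by omega)
    have h3 : a + (d + 1) = (a + d) + 1 := rfl
    rw [h3]
    omega

lemma chain_down (F : ℕ → ℕ) (lo m : ℕ) (h : ∀ i, lo ≤ i → i + 1 < m → F (i + 1) < F i) :
    ∀ d a, lo ≤ a → a + d < m → F (a + d) + d ≤ F a := by
  intro d
  induction d with
  | zero => intro a _ _; simp
  | succ d ih =>
    intro a ha hm
    have h1 := ih a ha (by omega)
    have h2 := h (a + d) (by omega) (by omega)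
    have h3 : a + (d + 1) = (a + d) + 1 := rfl
    rw [h3]
    omega

lemma eq_one_of_asc (σ : Equiv.Perm (Fin n))
    (h : ∀ i, i + 1 < n → fval σ i < fval σ (i + 1)) : σ = 1 := by
  have key : ∀ a, a < n → fval σ a = a := by
    intro a ha
    have h1 := chain_up (fval σ) 0 n (fun i _ hi => h i hi) a 0 (Nat.zero_le _) (by omega)
    have h2 := chain_up (fval σ) 0 n (fun i _ hi => h i hi) (n - 1 - a) a (Nat.zero_le _)
      (by omega)
    have h3 : a + (n - 1 - a) = n - 1 := by omega
    rw [h3] at h2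
    have h4 := fval_lt σ (n - 1) (by omega)
    simp only [Nat.zero_add] at h1
    omega
  apply Equiv.ext
  intro i
  apply Fin.ext
  have := key i.val i.isLt
  rw [fval_apply σ i.val i.isLt] at this
  simpa using this

lemma eq_rev_of_desc (σ : Equiv.Perm (Fin n))
    (h : ∀ i, i + 1 < n → fval σ (i + 1) < fval σ i) : σ = Fin.revPerm := by
  have key : ∀ a, a < n → fval σ a = n - 1 - a := by
    intro a ha
    have h1 := chain_down (fval σ) 0 n (fun i _ hi => h i hi) (n - 1 - a) a (Nat.zero_le _)
      (by omega)
    have h2 := chain_down (fval σ) 0 n (fun i _ hi => h i hi) a 0 (Nat.zero_le _) (by omega)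
    have h3 : a + (n - 1 - a) = n - 1 := by omega
    rw [h3] at h1
    have h4 := fval_lt σ 0 (by omega)
    simp only [Nat.zero_add] at h2
    omega
  apply Equiv.ext
  intro i
  apply Fin.ext
  have h1 := key i.val i.isLt
  rw [fval_apply σ i.val i.isLt] at h1
  have h2 : ((Fin.revPerm i : Fin n) : ℕ) = n - (i.val + 1) := by
    simp [Fin.revPerm_apply, Fin.val_rev]
  have h3 := i.isLt
  simp only [Fin.eta] at h1
  omega

lemma firstSum_swap_cross (σ : Equiv.Perm (Fin n)) {j : ℕ} (p q : Fin n)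
    (hp : (p : ℕ) < j) (hq : j ≤ (q : ℕ)) :
    firstSum (σ * Equiv.swap p q) j + ((σ p : ℕ) + 1) =
      firstSum σ j + ((σ q : ℕ) + 1) := by
  classical
  unfold firstSum
  set s := Finset.univ.filter (fun i : Fin n => (i : ℕ) < j) with hs
  have hps : p ∈ s := by simp [hs, hp]
  have hqs : q ∉ s := by simp [hs, not_lt.2 hq]
  have key : ∀ i ∈ s.erase p, ((σ * Equiv.swap p q) i : ℕ) + 1 = (σ i : ℕ) + 1 := by
    intro i hi
    have hip : i ≠ p := (Finset.mem_erase.1 hi).1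
    have hiq : i ≠ q := by
      intro h
      exact hqs (h ▸ (Finset.mem_erase.1 hi).2)
    rw [Equiv.Perm.mul_apply, Equiv.swap_apply_of_ne_of_ne hip hiq]
  rw [← Finset.sum_erase_add s _ hps, ← Finset.sum_erase_add s _ hps]
  rw [Finset.sum_congr rfl key]
  have : ((σ * Equiv.swap p q) p : ℕ) = (σ q : ℕ) := by
    rw [Equiv.Perm.mul_apply, Equiv.swap_apply_left]
  omega

lemma firstSum_swap_within (σ : Equiv.Perm (Fin n)) {j : ℕ} (p q : Fin n)
    (h : ((p : ℕ) < j ∧ (q : ℕ) < j) ∨ (j ≤ (p : ℕ) ∧ j ≤ (q : ℕ))) :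
    firstSum (σ * Equiv.swap p q) j = firstSum σ j := by
  classical
  unfold firstSum
  rcases h with ⟨hp, hq⟩ | ⟨hp, hq⟩
  · have hmem : ∀ i : Fin n, ((i : ℕ) < j) ↔ ((Equiv.swap p q i : ℕ) < j) := by
      intro i
      rcases eq_or_ne i p with rfl | h1
      · rw [Equiv.swap_apply_left]; exact ⟨fun _ => hq, fun _ => hp⟩
      rcases eq_or_ne i q with rfl | h2
      · rw [Equiv.swap_apply_right]; exact ⟨fun _ => hp, fun _ => hq⟩
      · rw [Equiv.swap_apply_of_ne_of_ne h1 h2]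
    refine Finset.sum_nbij' (fun i => Equiv.swap p q i) (fun i => Equiv.swap p q i) ?_ ?_ ?_ ?_ ?_
    · intro i hi
      simp only [Finset.mem_filter, Finset.mem_univ, true_and] at hi ⊢
      exact (hmem i).1 hi
    · intro i hi
      simp only [Finset.mem_filter, Finset.mem_univ, true_and] at hi ⊢
      have := (hmem (Equiv.swap p q i))
      rw [Equiv.swap_apply_self] at this
      exact this.2 hi
    · intro i _; exact Equiv.swap_apply_self p q i
    · intro i _; exact Equiv.swap_apply_self p q i
    · intro i _
      rw [Equiv.Perm.mul_apply]
  · apply Finset.sum_congr rfl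
    intro i hi
    simp only [Finset.mem_filter, Finset.mem_univ, true_and] at hi
    have hip : i ≠ p := fun h => by rw [h] at hi; omega
    have hiq : i ≠ q := fun h => by rw [h] at hi; omega
    rw [Equiv.Perm.mul_apply, Equiv.swap_apply_of_ne_of_ne hip hiq]

lemma invCount_le_bound (σ : Equiv.Perm (Fin n)) : invCount σ ≤ n * n := by
  unfold invCount
  calc ((Finset.univ : Finset (Fin n × Fin n)).filter _).card
      ≤ (Finset.univ : Finset (Fin n × Fin n)).card := Finset.card_filter_le _ _
    _ = n * n := by simp

lemma cover_firstSum_le_aux {j : ℕ} (u : Equiv.Perm (Fin n)) (p q : Fin n) (hpq : p < q)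
    (hinv : invCount (u * Equiv.swap p q) = invCount u + 1) :
    firstSum u j ≤ firstSum (u * Equiv.swap p q) j := by
  rcases lt_or_ge (u p) (u q) with hval | hval
  · rcases lt_or_ge (q : ℕ) j with hq | hq
    · have hp : (p : ℕ) < j := lt_trans hpq hq
      rw [firstSum_swap_within u p q (Or.inl ⟨hp, hq⟩)]
    · rcases lt_or_ge (p : ℕ) j with hp | hp
      · have := firstSum_swap_cross u p q hp hq
        have hval' : (u p : ℕ) < (u q : ℕ) := hval
        omega
      · rw [firstSum_swap_within u p q (Or.inr ⟨hp, hq⟩)]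
  · have hne : u q ≠ u p := fun h => (ne_of_lt hpq) (u.injective h).symm
    have hval' : u q < u p := lt_of_le_of_ne hval hne
    have h2 := invCount_lt_swap (u * Equiv.swap p q) p q hpq (by
      simp only [Equiv.Perm.mul_apply, Equiv.swap_apply_left, Equiv.swap_apply_right]
      exact hval')
    rw [mul_assoc, Equiv.swap_mul_self, mul_one] at h2
    omega

lemma cover_firstSum_le {j : ℕ} {u v : Equiv.Perm (Fin n)} (h : BruhatCover u v) :
    firstSum u j ≤ firstSum v j := by
  obtain ⟨⟨a, b, hab, hv⟩, hinv⟩ := h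
  have hv' : v = u * Equiv.swap (u⁻¹ a) (u⁻¹ b) := by
    rw [Equiv.mul_swap_eq_swap_mul, perm_apply_inv_self, perm_apply_inv_self, hv]
  set p := u⁻¹ a with hp
  set q := u⁻¹ b with hq
  have hpq : p ≠ q := by
    intro h
    apply hab
    rw [← perm_apply_inv_self u a, ← perm_apply_inv_self u b, ← hp, ← hq, h]
  rcases lt_trichotomy p q with hlt | heq | hgt
  · rw [hv'] at hinv ⊢
    exact cover_firstSum_le_aux u p q hlt hinv
  · exact absurd heq hpq
  · rw [Equiv.swap_comm] at hv'
    rw [hv'] at hinv ⊢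
    exact cover_firstSum_le_aux u q p hgt hinv

lemma bruhatLE_firstSum_le {j : ℕ} {u v : Equiv.Perm (Fin n)}
    (h : Relation.ReflTransGen BruhatCover u v) :
    firstSum u j ≤ firstSum v j := by
  induction h with
  | refl => exact le_rfl
  | tail _ hc ih => exact ih.trans (cover_firstSum_le hc)

lemma reach_up (P : Equiv.Perm (Fin n) → Prop) (τ : Equiv.Perm (Fin n))
    (hstep : ∀ σ, P σ → σ ≠ τ → ∃ σ', BruhatCover σ σ' ∧ P σ') :
    ∀ σ, P σ → Relation.ReflTransGen BruhatCover σ τ := by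
  have key : ∀ k (σ : Equiv.Perm (Fin n)), P σ → n * n + 1 - invCount σ ≤ k →
      Relation.ReflTransGen BruhatCover σ τ := by
    intro k
    induction k with
    | zero =>
      intro σ _ hk
      have := invCount_le_bound σ
      omega
    | succ k ih =>
      intro σ hσ hk
      by_cases h : σ = τ
      · subst h; exact Relation.ReflTransGen.refl
      · obtain ⟨σ', hc, hP⟩ := hstep σ hσ h
        have h1 : invCount σ' = invCount σ + 1 := hc.2
        have h2 := invCount_le_bound σ'
        exact Relation.ReflTransGen.head hc (ih σ' hP (by omega))
  intro σ hσ
  exact key _ σ hσ le_rfl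

lemma reach_down (P : Equiv.Perm (Fin n) → Prop) (τ : Equiv.Perm (Fin n))
    (hstep : ∀ σ, P σ → σ ≠ τ → ∃ σ', BruhatCover σ' σ ∧ P σ') :
    ∀ σ, P σ → Relation.ReflTransGen BruhatCover τ σ := by
  have key : ∀ k (σ : Equiv.Perm (Fin n)), P σ → invCount σ ≤ k →
      Relation.ReflTransGen BruhatCover τ σ := by
    intro k
    induction k with
    | zero =>
      intro σ hσ hk
      by_cases h : σ = τ
      · subst h; exact Relation.ReflTransGen.refl
      · obtain ⟨σ', hc, _⟩ := hstep σ hσ h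
        have h1 : invCount σ = invCount σ' + 1 := hc.2
        omega
    | succ k ih =>
      intro σ hσ hk
      by_cases h : σ = τ
      · subst h; exact Relation.ReflTransGen.refl
      · obtain ⟨σ', hc, hP⟩ := hstep σ hσ h
        have h1 : invCount σ = invCount σ' + 1 := hc.2
        exact Relation.ReflTransGen.tail (ih σ' hP (by omega)) hc
  intro σ hσ
  exact key _ σ hσ le_rfl

lemma cover_gen (σ : Equiv.Perm (Fin n)) (pi qi : ℕ) (hpi : pi < n) (hqi : qi < n)
    (hlt : pi < qi) (hval : fval σ pi < fval σ qi)
    (hmid : ∀ r, pi < r → r < qi → r < n → fval σ r < fval σ pi ∨ fval σ qi < fval σ r) :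
    BruhatCover σ (σ * Equiv.swap ⟨pi, hpi⟩ ⟨qi, hqi⟩) := by
  apply bruhatCover_swap
  · exact hlt
  · rw [fval_apply σ pi hpi, fval_apply σ qi hqi] at hval
    exact hval
  · intro r hr1 hr2
    have hr1' : pi < (r : ℕ) := hr1
    have hr2' : (r : ℕ) < qi := hr2
    have := hmid r.val hr1' hr2' r.isLt
    rw [fval_apply σ pi hpi, fval_apply σ qi hqi, fval_apply σ r.val r.isLt] at this
    simp only [Fin.eta] at this
    rcases this with h | h
    · exact Or.inl h
    · exact Or.inr h

lemma cover_adjval (σ : Equiv.Perm (Fin n)) (pi qi : ℕ) (hpi : pi < n) (hqi : qi < n)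
    (hlt : pi < qi) (hvals : fval σ qi = fval σ pi + 1) :
    BruhatCover σ (σ * Equiv.swap ⟨pi, hpi⟩ ⟨qi, hqi⟩) := by
  apply cover_gen σ pi qi hpi hqi hlt (by omega)
  intro r hr1 hr2 hrn
  have h1 : fval σ r ≠ fval σ pi := fun h => by
    have := fval_inj σ hrn hpi h
    omega
  have h2 : fval σ r ≠ fval σ qi := fun h => by
    have := fval_inj σ hrn hqi h
    omega
  omega

lemma sum_reflect_j (j : ℕ) :
    (∑ i ∈ Finset.range j, (j - i)) = ∑ i ∈ Finset.range j, (i + 1) := by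
  have h := Finset.sum_range_reflect (fun i => i + 1) j
  rw [← h]
  apply Finset.sum_congr rfl
  intro i hi
  have := Finset.mem_range.1 hi
  omega

lemma fval_val (σ : Equiv.Perm (Fin n)) (i : Fin n) : fval σ i.val = (σ i : ℕ) := by
  rw [fval_apply σ i.val i.isLt]

lemma up_step (j : ℕ) (hj1 : 1 ≤ j) (hjn : j + 2 ≤ n) (τmax : Equiv.Perm (Fin n))
    (hτmax : ∀ i : Fin n, (τmax i : ℕ) =
      if (i : ℕ) = 0 then j
      else if (i : ℕ) < j then j - 1 - (i : ℕ)
      else if (i : ℕ) < n - 1 then n + j - 1 - (i : ℕ)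
      else j - 1)
    (σ : Equiv.Perm (Fin n)) (hne : σ ≠ τmax)
    (hsum : firstSum σ j ≤ (∑ i ∈ Finset.range j, (i + 1)) + 1) :
    ∃ σ', BruhatCover σ σ' ∧ firstSum σ' j ≤ (∑ i ∈ Finset.range j, (i + 1)) + 1 := by
  have hjn' : j ≤ n := by omega
  set T := ∑ i ∈ Finset.range j, (i + 1) with hT
  by_cases h1 : ∃ i, i + 1 < j ∧ fval σ i < fval σ (i + 1)
  · obtain ⟨i, hij, hasc⟩ := h1
    refine ⟨σ * Equiv.swap ⟨i, by omega⟩ ⟨i + 1, by omega⟩,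
      cover_gen σ i (i + 1) (by omega) (by omega) (by omega) hasc
        (by intro r hr1 hr2 _; omega), ?_⟩
    rw [firstSum_swap_within σ _ _ (Or.inl ⟨(by omega : i < j), hij⟩)]
    exact hsum
  by_cases h2 : ∃ i, j ≤ i ∧ i + 1 < n ∧ fval σ i < fval σ (i + 1)
  · obtain ⟨i, hij, hin, hasc⟩ := h2
    refine ⟨σ * Equiv.swap ⟨i, by omega⟩ ⟨i + 1, by omega⟩,
      cover_gen σ i (i + 1) (by omega) (by omega) (by omega) hasc
        (by intro r hr1 hr2 _; omega), ?_⟩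
    rw [firstSum_swap_within σ _ _ (Or.inr ⟨hij, (by omega : j ≤ i + 1)⟩)]
    exact hsum
  push_neg at h1 h2
  have hd1 : ∀ i, i + 1 < j → fval σ (i + 1) < fval σ i := by
    intro i hi
    have hne' : fval σ (i + 1) ≠ fval σ i := fun h => by
      have := fval_inj σ (by omega) (by omega) h
      omega
    have := h1 i hi
    omega
  have hd2 : ∀ i, j ≤ i → i + 1 < n → fval σ (i + 1) < fval σ i := by
    intro i hi1 hi2
    have hne' : fval σ (i + 1) ≠ fval σ i := fun h => by
      have := fval_inj σ (by omega) (by omega) h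
      omega
    have := h2 i hi1 hi2
    omega
  have hlow : ∀ i, i < j → j - 1 - i ≤ fval σ i := by
    intro i hi
    have := chain_down (fval σ) 0 j (fun k _ hk => hd1 k hk) (j - 1 - i) i (Nat.zero_le _)
      (by omega)
    rw [show i + (j - 1 - i) = j - 1 by omega] at this
    omega
  have hsum' : firstSum σ j = T + (∑ i ∈ Finset.range j, (fval σ i - (j - 1 - i))) := by
    rw [firstSum_eq σ hjn']
    have e1 : ∀ i ∈ Finset.range j, fval σ i + 1 = (j - i) + (fval σ i - (j - 1 - i)) := by
      intro i hi
      have hi' := Finset.mem_range.1 hi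
      have := hlow i hi'
      omega
    rw [Finset.sum_congr rfl e1, Finset.sum_add_distrib, sum_reflect_j j]
  set D := ∑ i ∈ Finset.range j, (fval σ i - (j - 1 - i)) with hD
  have hD1 : D ≤ 1 := by omega
  rcases Nat.lt_or_ge D 1 with hD0 | hDge
  · have hDz : D = 0 := by omega
    have hz : ∀ i, i < j → fval σ i = j - 1 - i := by
      intro i hi
      have h' := Finset.sum_eq_zero_iff.1 (hD ▸ hDz) i (Finset.mem_range.2 hi)
      have := hlow i hi
      omega
    have hb2 : ∀ i, j ≤ i → i < n → j ≤ fval σ i := by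
      intro i hij hin
      by_contra hlt
      push_neg at hlt
      have hk : fval σ (j - 1 - fval σ i) = j - 1 - (j - 1 - fval σ i) := hz _ (by omega)
      have heq : fval σ i = fval σ (j - 1 - fval σ i) := by omega
      have := fval_inj σ hin (by omega) heq
      omega
    have hFj : fval σ (n - 1) = j := by
      have hub := chain_down (fval σ) j n (fun k hk1 hk2 => hd2 k hk1 hk2) (n - 1 - j) j
        le_rfl (by omega)
      rw [show j + (n - 1 - j) = n - 1 by omega] at hub
      have := fval_lt σ j (by omega)
      have := hb2 (n - 1) (by omega) (by omega)
      omega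
    have hF0 : fval σ 0 = j - 1 := by
      have := hz 0 (by omega)
      omega
    have h0 : 0 < n := by omega
    have hn1 : n - 1 < n := by omega
    refine ⟨σ * Equiv.swap ⟨0, h0⟩ ⟨n - 1, hn1⟩,
      cover_adjval σ 0 (n - 1) h0 hn1 (by omega) (by omega), ?_⟩
    have hcross := firstSum_swap_cross σ (⟨0, h0⟩ : Fin n) (⟨n - 1, hn1⟩ : Fin n)
      (show ((⟨0, h0⟩ : Fin n) : ℕ) < j from by simp; omega)
      (show j ≤ ((⟨n - 1, hn1⟩ : Fin n) : ℕ) from by simp; omega)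
    have e0 : ((σ (⟨0, h0⟩ : Fin n)) : ℕ) = j - 1 := by
      have := fval_apply σ 0 h0
      omega
    have en : ((σ (⟨n - 1, hn1⟩ : Fin n)) : ℕ) = j := by
      have := fval_apply σ (n - 1) hn1
      omega
    omega
  · exfalso
    have hDeq : D = 1 := by omega
    have hex : ∃ m ∈ Finset.range j, fval σ m - (j - 1 - m) ≠ 0 := by
      by_contra hc
      push_neg at hc
      have : D = 0 := Finset.sum_eq_zero (fun i hi => hc i hi)
      omega
    obtain ⟨m, hmr, hmne⟩ := hex
    have hmj := Finset.mem_range.1 hmr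
    have hdm : fval σ m - (j - 1 - m) = 1 := by
      have hle := Finset.single_le_sum
        (f := fun i => fval σ i - (j - 1 - i)) (fun i _ => Nat.zero_le _) hmr
      have hle' : fval σ m - (j - 1 - m) ≤ D := hle
      omega
    have hzrest : ∀ i, i < j → i ≠ m → fval σ i = j - 1 - i := by
      intro i hij hine
      have herase : ∑ x ∈ (Finset.range j).erase m, (fval σ x - (j - 1 - x)) = 0 := by
        have h2 := Finset.add_sum_erase (Finset.range j)
          (fun i => fval σ i - (j - 1 - i)) hmr
        have h2' : fval σ m - (j - 1 - m) +
            ∑ x ∈ (Finset.range j).erase m, (fval σ x - (j - 1 - x)) = D := h2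
        omega
      have := Finset.sum_eq_zero_iff.1 herase i
        (Finset.mem_erase.2 ⟨hine, Finset.mem_range.2 hij⟩)
      have := hlow i hij
      omega
    have hm0 : m = 0 := by
      by_contra hm0
      have h1' : fval σ (m - 1) = j - 1 - (m - 1) := hzrest (m - 1) (by omega) (by omega)
      have h2' : fval σ m = j - m := by
        have := hlow m hmj
        omega
      have heq : fval σ (m - 1) = fval σ m := by omega
      have := fval_inj σ (by omega) (by omega) heq
      omega
    have hF0 : fval σ 0 = j := by
      rw [hm0] at hdm
      have := hlow 0 (by omega)
      omega
    have hFi : ∀ i, 1 ≤ i → i < j → fval σ i = j - 1 - i := fun i ha hb =>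
      hzrest i hb (by omega)
    have havoid : ∀ i, j ≤ i → i < n → fval σ i = j - 1 ∨ j + 1 ≤ fval σ i := by
      intro i hij hin
      have hne0 : fval σ i ≠ j := fun h => by
        have heq2 : fval σ i = fval σ 0 := by omega
        have := fval_inj σ hin (by omega) heq2
        omega
      by_cases hlt : fval σ i + 2 ≤ j
      · exfalso
        have hk1 : 1 ≤ j - 1 - fval σ i := by omega
        have hk2 : j - 1 - fval σ i < j := by omega
        have := hFi (j - 1 - fval σ i) hk1 hk2
        have heq : fval σ i = fval σ (j - 1 - fval σ i) := by omega
        have := fval_inj σ hin (by omega) heq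
        omega
      · omega
    have hchain_ub : ∀ i, j ≤ i → i < n → fval σ i + i ≤ n - 1 + j := by
      intro i hij hin
      have := chain_down (fval σ) j n (fun k hk1 hk2 => hd2 k hk1 hk2) (i - j) j le_rfl
        (by omega)
      rw [show j + (i - j) = i by omega] at this
      have := fval_lt σ j (by omega)
      omega
    have hFn1 : fval σ (n - 1) = j - 1 := by
      rcases havoid (n - 1) (by omega) (by omega) with h | h
      · exact h
      · exfalso
        have := hchain_ub (n - 1) (by omega) (by omega)
        omega
    have hFn2 : fval σ (n - 2) = j + 1 := by
      have hgt : fval σ (n - 1) < fval σ (n - 2) := by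
        have := hd2 (n - 2) (by omega) (by omega)
        rw [show n - 2 + 1 = n - 1 by omega] at this
        exact this
      rcases havoid (n - 2) (by omega) (by omega) with h | h
      · omega
      · have := hchain_ub (n - 2) (by omega) (by omega)
        omega
    have hFmid : ∀ i, j ≤ i → i ≤ n - 2 → fval σ i = n + j - 1 - i := by
      intro i hij hin
      have hlb := chain_down (fval σ) j n (fun k hk1 hk2 => hd2 k hk1 hk2) (n - 2 - i) i hij
        (by omega)
      rw [show i + (n - 2 - i) = n - 2 by omega] at hlb
      have := hchain_ub i hij (by omega)
      omega
    apply hne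
    apply Equiv.ext
    intro i
    apply Fin.ext
    rw [hτmax i]
    have hiv := i.isLt
    have hfv := fval_val σ i
    by_cases hc0 : (i : ℕ) = 0
    · rw [if_pos hc0]
      rw [hc0] at hfv
      omega
    · rw [if_neg hc0]
      by_cases hc1 : (i : ℕ) < j
      · rw [if_pos hc1]
        have := hFi i.val (by omega) hc1
        omega
      · rw [if_neg hc1]
        by_cases hc2 : (i : ℕ) < n - 1
        · rw [if_pos hc2]
          have := hFmid i.val (by omega) (by omega)
          omega
        · rw [if_neg hc2]
          have hieq : i.val = n - 1 := by omega
          rw [hieq] at hfv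
          omega

lemma fval_swap_left (σ : Equiv.Perm (Fin n)) (P Q : Fin n) :
    fval (σ * Equiv.swap P Q) P.val = fval σ Q.val := by
  rw [fval_apply _ P.val P.isLt, fval_apply _ Q.val Q.isLt]
  simp [Equiv.Perm.mul_apply]

lemma fval_swap_right (σ : Equiv.Perm (Fin n)) (P Q : Fin n) :
    fval (σ * Equiv.swap P Q) Q.val = fval σ P.val := by
  rw [fval_apply _ Q.val Q.isLt, fval_apply _ P.val P.isLt]
  simp [Equiv.Perm.mul_apply]

lemma down_step (j : ℕ) (hj1 : 1 ≤ j) (hjn : j + 2 ≤ n) (τmin : Equiv.Perm (Fin n))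
    (hτmin : ∀ i : Fin n, (τmin i : ℕ) =
      if (i : ℕ) < j - 1 then (i : ℕ)
      else if (i : ℕ) = j - 1 then j
      else if (i : ℕ) = j then j - 1
      else (i : ℕ))
    (σ : Equiv.Perm (Fin n)) (hne : σ ≠ τmin)
    (hsum : (∑ i ∈ Finset.range j, (i + 1)) + 1 ≤ firstSum σ j) :
    ∃ σ', BruhatCover σ' σ ∧ (∑ i ∈ Finset.range j, (i + 1)) + 1 ≤ firstSum σ' j := by
  have hjn' : j ≤ n := by omega
  set T := ∑ i ∈ Finset.range j, (i + 1) with hT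
  by_cases h1 : ∃ i, i + 1 < j ∧ fval σ (i + 1) < fval σ i
  · obtain ⟨i, hij, hdesc⟩ := h1
    have hpn : i < n := by omega
    have hqn : i + 1 < n := by omega
    have e1 : fval (σ * Equiv.swap ⟨i, hpn⟩ ⟨i + 1, hqn⟩) i = fval σ (i + 1) :=
      fval_swap_left σ ⟨i, hpn⟩ ⟨i + 1, hqn⟩
    have e2 : fval (σ * Equiv.swap ⟨i, hpn⟩ ⟨i + 1, hqn⟩) (i + 1) = fval σ i :=
      fval_swap_right σ ⟨i, hpn⟩ ⟨i + 1, hqn⟩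
    have hcov := cover_gen (σ * Equiv.swap ⟨i, hpn⟩ ⟨i + 1, hqn⟩) i (i + 1) hpn hqn
      (by omega) (by omega) (by intro r hr1 hr2 _; omega)
    have hback : (σ * Equiv.swap ⟨i, hpn⟩ ⟨i + 1, hqn⟩) * Equiv.swap ⟨i, hpn⟩ ⟨i + 1, hqn⟩
        = σ := by
      rw [mul_assoc, Equiv.swap_mul_self, mul_one]
    rw [hback] at hcov
    refine ⟨σ * Equiv.swap ⟨i, hpn⟩ ⟨i + 1, hqn⟩, hcov, ?_⟩
    rw [firstSum_swap_within σ _ _ (Or.inl ⟨(by omega : i < j), hij⟩)]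
    exact hsum
  by_cases h2 : ∃ i, j ≤ i ∧ i + 1 < n ∧ fval σ (i + 1) < fval σ i
  · obtain ⟨i, hij, hin, hdesc⟩ := h2
    have hpn : i < n := by omega
    have hqn : i + 1 < n := by omega
    have e1 : fval (σ * Equiv.swap ⟨i, hpn⟩ ⟨i + 1, hqn⟩) i = fval σ (i + 1) :=
      fval_swap_left σ ⟨i, hpn⟩ ⟨i + 1, hqn⟩
    have e2 : fval (σ * Equiv.swap ⟨i, hpn⟩ ⟨i + 1, hqn⟩) (i + 1) = fval σ i :=
      fval_swap_right σ ⟨i, hpn⟩ ⟨i + 1, hqn⟩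
    have hcov := cover_gen (σ * Equiv.swap ⟨i, hpn⟩ ⟨i + 1, hqn⟩) i (i + 1) hpn hqn
      (by omega) (by omega) (by intro r hr1 hr2 _; omega)
    have hback : (σ * Equiv.swap ⟨i, hpn⟩ ⟨i + 1, hqn⟩) * Equiv.swap ⟨i, hpn⟩ ⟨i + 1, hqn⟩
        = σ := by
      rw [mul_assoc, Equiv.swap_mul_self, mul_one]
    rw [hback] at hcov
    refine ⟨σ * Equiv.swap ⟨i, hpn⟩ ⟨i + 1, hqn⟩, hcov, ?_⟩
    rw [firstSum_swap_within σ _ _ (Or.inr ⟨hij, (by omega : j ≤ i + 1)⟩)]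
    exact hsum
  push_neg at h1 h2
  have ha1 : ∀ i, i + 1 < j → fval σ i < fval σ (i + 1) := by
    intro i hi
    have hne' : fval σ i ≠ fval σ (i + 1) := fun h => by
      have := fval_inj σ (by omega) (by omega) h
      omega
    have := h1 i hi
    omega
  have ha2 : ∀ i, j ≤ i → i + 1 < n → fval σ i < fval σ (i + 1) := by
    intro i hi1 hi2
    have hne' : fval σ i ≠ fval σ (i + 1) := fun h => by
      have := fval_inj σ (by omega) (by omega) h
      omega
    have := h2 i hi1 hi2
    omega
  have hlow : ∀ i, i < j → i ≤ fval σ i := by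
    intro i hi
    have := chain_up (fval σ) 0 j (fun k _ hk => ha1 k hk) i 0 (Nat.zero_le _) (by omega)
    simp only [Nat.zero_add] at this
    omega
  have hsum' : firstSum σ j = T + (∑ i ∈ Finset.range j, (fval σ i - i)) := by
    rw [firstSum_eq σ hjn']
    have e1 : ∀ i ∈ Finset.range j, fval σ i + 1 = (i + 1) + (fval σ i - i) := by
      intro i hi
      have hi' := Finset.mem_range.1 hi
      have := hlow i hi'
      omega
    rw [Finset.sum_congr rfl e1, Finset.sum_add_distrib]
  set D := ∑ i ∈ Finset.range j, (fval σ i - i) with hD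
  have hDge : 1 ≤ D := by omega
  rcases Nat.lt_or_ge D 2 with hD1 | hD2
  · -- D = 1 : σ = τmin, contradiction
    exfalso
    have hDeq : D = 1 := by omega
    have hex : ∃ m ∈ Finset.range j, fval σ m - m ≠ 0 := by
      by_contra hc
      push_neg at hc
      have : D = 0 := Finset.sum_eq_zero (fun i hi => hc i hi)
      omega
    obtain ⟨m, hmr, hmne⟩ := hex
    have hmj := Finset.mem_range.1 hmr
    have hdm : fval σ m - m = 1 := by
      have hle := Finset.single_le_sum
        (f := fun i => fval σ i - i) (fun i _ => Nat.zero_le _) hmr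
      have hle' : fval σ m - m ≤ D := hle
      omega
    have hzrest : ∀ i, i < j → i ≠ m → fval σ i = i := by
      intro i hij hine
      have herase : ∑ x ∈ (Finset.range j).erase m, (fval σ x - x) = 0 := by
        have h2' := Finset.add_sum_erase (Finset.range j) (fun i => fval σ i - i) hmr
        have h2'' : fval σ m - m +
            ∑ x ∈ (Finset.range j).erase m, (fval σ x - x) = D := h2'
        omega
      have := Finset.sum_eq_zero_iff.1 herase i
        (Finset.mem_erase.2 ⟨hine, Finset.mem_range.2 hij⟩)
      have := hlow i hij
      omega
    have hmj1 : m = j - 1 := by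
      by_contra hm'
      have h1' : fval σ (m + 1) = m + 1 := hzrest (m + 1) (by omega) (by omega)
      have h2' : fval σ m = m + 1 := by
        have := hlow m hmj
        omega
      have heq : fval σ m = fval σ (m + 1) := by omega
      have := fval_inj σ (by omega) (by omega) heq
      omega
    have hFj1 : fval σ (j - 1) = j := by
      rw [hmj1] at hdm
      have := hlow (j - 1) (by omega)
      omega
    have hFi : ∀ i, i < j - 1 → fval σ i = i := fun i hi => hzrest i (by omega) (by omega)
    have havoid : ∀ i, j ≤ i → i < n → fval σ i = j - 1 ∨ j + 1 ≤ fval σ i := by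
      intro i hij hin
      have hne0 : fval σ i ≠ j := fun h => by
        have heq2 : fval σ i = fval σ (j - 1) := by omega
        have := fval_inj σ hin (by omega) heq2
        omega
      by_cases hlt : fval σ i + 2 ≤ j
      · exfalso
        have := hFi (fval σ i) (by omega)
        have heq : fval σ i = fval σ (fval σ i) := by omega
        have := fval_inj σ hin (by omega) heq
        omega
      · omega
    have hub : ∀ i, j ≤ i → i < n → fval σ i ≤ i := by
      intro i hij hin
      have := chain_up (fval σ) j n (fun k hk1 hk2 => ha2 k hk1 hk2) (n - 1 - i) i hij
        (by omega)
      rw [show i + (n - 1 - i) = n - 1 by omega] at this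
      have := fval_lt σ (n - 1) (by omega)
      omega
    have hFj : fval σ j = j - 1 := by
      rcases havoid j (by omega) (by omega) with h | h
      · exact h
      · have := hub j (by omega) (by omega)
        omega
    have hFj2 : fval σ (j + 1) = j + 1 := by
      have hgt : fval σ j < fval σ (j + 1) := ha2 j le_rfl (by omega)
      rcases havoid (j + 1) (by omega) (by omega) with h | h
      · omega
      · have := hub (j + 1) (by omega) (by omega)
        omega
    have hFrest : ∀ i, j + 1 ≤ i → i < n → fval σ i = i := by
      intro i hij hin
      have := chain_up (fval σ) j n (fun k hk1 hk2 => ha2 k hk1 hk2) (i - (j + 1)) (j + 1)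
        (by omega) (by omega)
      rw [show j + 1 + (i - (j + 1)) = i by omega] at this
      have := hub i (by omega) hin
      omega
    apply hne
    apply Equiv.ext
    intro i
    apply Fin.ext
    rw [hτmin i]
    have hiv := i.isLt
    have hfv := fval_val σ i
    by_cases hc0 : (i : ℕ) < j - 1
    · rw [if_pos hc0]
      have := hFi i.val hc0
      omega
    · rw [if_neg hc0]
      by_cases hc1 : (i : ℕ) = j - 1
      · rw [if_pos hc1]
        rw [hc1] at hfv
        omega
      · rw [if_neg hc1]
        by_cases hc2 : (i : ℕ) = j
        · rw [if_pos hc2]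
          rw [hc2] at hfv
          omega
        · rw [if_neg hc2]
          have := hFrest i.val (by omega) hiv
          omega
  · -- D ≥ 2 : move one unit down across the boundary
    have hex : ∃ k, k < j ∧ k < fval σ k := by
      by_contra hc
      push_neg at hc
      have hz : D = 0 := Finset.sum_eq_zero (fun i hi => by
        have hi' := Finset.mem_range.1 hi
        have := hc i hi'
        omega)
      omega
    have hmj := (Nat.find_spec hex).1
    have hmF := (Nat.find_spec hex).2
    set m := Nat.find hex with hm
    have hprev : ∀ k, k < m → fval σ k = k := by
      intro k hk
      have h' := Nat.find_min hex hk
      have hkj : k < j := by omega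
      have := hlow k hkj
      omega
    have hx1 : 1 ≤ fval σ m := by omega
    have hnotin : ∀ k, k < j → fval σ k ≠ fval σ m - 1 := by
      intro k hkj
      rcases lt_trichotomy k m with h | h | h
      · rw [hprev k h]
        omega
      · rw [h]
        omega
      · have := chain_up (fval σ) 0 j (fun r _ hr => ha1 r hr) (k - m) m (Nat.zero_le _)
          (by omega)
        rw [show m + (k - m) = k by omega] at this
        omega
    have hxn : fval σ m - 1 < n := by
      have := fval_lt σ m (by omega)
      omega
    have hQval : fval σ (σ⁻¹ ⟨fval σ m - 1, hxn⟩).val = fval σ m - 1 := by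
      rw [fval_val σ (σ⁻¹ ⟨fval σ m - 1, hxn⟩), perm_apply_inv_self]
    have hQj : j ≤ (σ⁻¹ ⟨fval σ m - 1, hxn⟩).val := by
      by_contra h
      push_neg at h
      exact hnotin _ h hQval
    have hmn : m < n := by omega
    have hmQ : m < (σ⁻¹ ⟨fval σ m - 1, hxn⟩).val := by omega
    have e1 : fval (σ * Equiv.swap ⟨m, hmn⟩ (σ⁻¹ ⟨fval σ m - 1, hxn⟩)) m
        = fval σ (σ⁻¹ ⟨fval σ m - 1, hxn⟩).val :=
      fval_swap_left σ ⟨m, hmn⟩ (σ⁻¹ ⟨fval σ m - 1, hxn⟩)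
    have e2 : fval (σ * Equiv.swap ⟨m, hmn⟩ (σ⁻¹ ⟨fval σ m - 1, hxn⟩))
        (σ⁻¹ ⟨fval σ m - 1, hxn⟩).val = fval σ m :=
      fval_swap_right σ ⟨m, hmn⟩ (σ⁻¹ ⟨fval σ m - 1, hxn⟩)
    have hcov := cover_adjval (σ * Equiv.swap ⟨m, hmn⟩ (σ⁻¹ ⟨fval σ m - 1, hxn⟩)) m
      (σ⁻¹ ⟨fval σ m - 1, hxn⟩).val hmn (σ⁻¹ ⟨fval σ m - 1, hxn⟩).isLt hmQ (by omega)
    have hQeta : (⟨(σ⁻¹ ⟨fval σ m - 1, hxn⟩).val, (σ⁻¹ ⟨fval σ m - 1, hxn⟩).isLt⟩ : Fin n)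
        = σ⁻¹ ⟨fval σ m - 1, hxn⟩ := Fin.eta _ _
    rw [hQeta] at hcov
    have hback : (σ * Equiv.swap ⟨m, hmn⟩ (σ⁻¹ ⟨fval σ m - 1, hxn⟩)) *
        Equiv.swap ⟨m, hmn⟩ (σ⁻¹ ⟨fval σ m - 1, hxn⟩) = σ := by
      rw [mul_assoc, Equiv.swap_mul_self, mul_one]
    rw [hback] at hcov
    refine ⟨σ * Equiv.swap ⟨m, hmn⟩ (σ⁻¹ ⟨fval σ m - 1, hxn⟩), hcov, ?_⟩
    have hcross := firstSum_swap_cross σ (⟨m, hmn⟩ : Fin n) (σ⁻¹ ⟨fval σ m - 1, hxn⟩)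
      (by omega : m < j) hQj
    have em : ((σ (⟨m, hmn⟩ : Fin n)) : ℕ) = fval σ m := (fval_apply σ m hmn).symm
    have eq' : ((σ (σ⁻¹ ⟨fval σ m - 1, hxn⟩)) : ℕ) = fval σ m - 1 := by
      rw [perm_apply_inv_self]
    omega

lemma exists_cover_down (σ : Equiv.Perm (Fin n)) (hne : σ ≠ 1) : ∃ σ', BruhatCover σ' σ := by
  by_cases h : ∃ i, i + 1 < n ∧ fval σ (i + 1) < fval σ i
  · obtain ⟨i, hin, hd⟩ := h
    have hpn : i < n := by omega
    have e1 : fval (σ * Equiv.swap ⟨i, hpn⟩ ⟨i + 1, hin⟩) i = fval σ (i + 1) :=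
      fval_swap_left σ ⟨i, hpn⟩ ⟨i + 1, hin⟩
    have e2 : fval (σ * Equiv.swap ⟨i, hpn⟩ ⟨i + 1, hin⟩) (i + 1) = fval σ i :=
      fval_swap_right σ ⟨i, hpn⟩ ⟨i + 1, hin⟩
    have hcov := cover_gen (σ * Equiv.swap ⟨i, hpn⟩ ⟨i + 1, hin⟩) i (i + 1) hpn hin
      (by omega) (by omega) (by intro r hr1 hr2 _; omega)
    have hback : (σ * Equiv.swap ⟨i, hpn⟩ ⟨i + 1, hin⟩) * Equiv.swap ⟨i, hpn⟩ ⟨i + 1, hin⟩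
        = σ := by
      rw [mul_assoc, Equiv.swap_mul_self, mul_one]
    rw [hback] at hcov
    exact ⟨_, hcov⟩
  · exfalso
    push_neg at h
    apply hne
    apply eq_one_of_asc
    intro i hi
    have hne' : fval σ i ≠ fval σ (i + 1) := fun hx => by
      have := fval_inj σ (by omega) (by omega) hx
      omega
    have := h i hi
    omega

lemma exists_cover_up (σ : Equiv.Perm (Fin n)) (hne : σ ≠ Fin.revPerm) :
    ∃ σ', BruhatCover σ σ' := by
  by_cases h : ∃ i, i + 1 < n ∧ fval σ i < fval σ (i + 1)
  · obtain ⟨i, hin, hd⟩ := h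
    have hpn : i < n := by omega
    exact ⟨_, cover_gen σ i (i + 1) hpn hin (by omega) hd (by intro r hr1 hr2 _; omega)⟩
  · exfalso
    push_neg at h
    apply hne
    apply eq_rev_of_desc
    intro i hi
    have hne' : fval σ i ≠ fval σ (i + 1) := fun hx => by
      have := fval_inj σ (by omega) (by omega) hx
      omega
    have := h i hi
    omega

lemma firstSum_taumax (j : ℕ) (hj1 : 1 ≤ j) (hjn : j + 2 ≤ n) (τmax : Equiv.Perm (Fin n))
    (hτmax : ∀ i : Fin n, (τmax i : ℕ) =
      if (i : ℕ) = 0 then j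
      else if (i : ℕ) < j then j - 1 - (i : ℕ)
      else if (i : ℕ) < n - 1 then n + j - 1 - (i : ℕ)
      else j - 1) :
    firstSum τmax j = (∑ i ∈ Finset.range j, (i + 1)) + 1 := by
  rw [firstSum_eq _ (by omega)]
  have e1 : ∀ i ∈ Finset.range j, fval τmax i + 1 = (j - i) + (if i = 0 then 1 else 0) := by
    intro i hi
    have hij := Finset.mem_range.1 hi
    have hin : i < n := by omega
    have hv : fval τmax i =
        if i = 0 then j
        else if i < j then j - 1 - i
        else if i < n - 1 then n + j - 1 - i
        else j - 1 := by
      rw [fval_apply _ i hin]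
      exact hτmax ⟨i, hin⟩
    by_cases h0 : i = 0
    · rw [if_pos h0] at hv ⊢
      omega
    · rw [if_neg h0] at hv ⊢
      rw [if_pos hij] at hv
      omega
  rw [Finset.sum_congr rfl e1, Finset.sum_add_distrib, sum_reflect_j j,
    Finset.sum_ite_eq' (Finset.range j) 0 (fun _ => 1)]
  rw [if_pos (Finset.mem_range.2 (by omega))]

lemma firstSum_taumin (j : ℕ) (hj1 : 1 ≤ j) (hjn : j + 2 ≤ n) (τmin : Equiv.Perm (Fin n))
    (hτmin : ∀ i : Fin n, (τmin i : ℕ) =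
      if (i : ℕ) < j - 1 then (i : ℕ)
      else if (i : ℕ) = j - 1 then j
      else if (i : ℕ) = j then j - 1
      else (i : ℕ)) :
    firstSum τmin j = (∑ i ∈ Finset.range j, (i + 1)) + 1 := by
  rw [firstSum_eq _ (by omega)]
  have e1 : ∀ i ∈ Finset.range j, fval τmin i + 1 = (i + 1) + (if i = j - 1 then 1 else 0) := by
    intro i hi
    have hij := Finset.mem_range.1 hi
    have hin : i < n := by omega
    have hv : fval τmin i =
        if i < j - 1 then i
        else if i = j - 1 then j
        else if i = j then j - 1
        else i := by
      rw [fval_apply _ i hin]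
      exact hτmin ⟨i, hin⟩
    by_cases h0 : i < j - 1
    · rw [if_pos h0] at hv
      rw [if_neg (by omega)]
      omega
    · rw [if_neg h0] at hv
      rw [if_pos (show i = j - 1 by omega)] at hv ⊢
      omega
  rw [Finset.sum_congr rfl e1, Finset.sum_add_distrib,
    Finset.sum_ite_eq' (Finset.range j) (j - 1) (fun _ => 1)]
  rw [if_pos (Finset.mem_range.2 (by omega))]

lemma tsum_eq (j : ℕ) : (∑ i ∈ Finset.range j, (i + 1)) = j * (j + 1) / 2 := by
  have h := Finset.sum_range_id_mul_two (j + 1)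
  have h2 : ∑ i ∈ Finset.range (j + 1), i = (∑ i ∈ Finset.range j, (i + 1)) + 0 :=
    Finset.sum_range_succ' (fun i => i) j
  have h3 : (j + 1) * (j + 1 - 1) = j * (j + 1) := by
    rw [Nat.add_sub_cancel]
    exact Nat.mul_comm _ _
  omega

end BruhatAux

theorem hyperplane_split_into_bruhat_intervals (n j : ℕ) (hj : 1 ≤ j) (hjn : j + 2 ≤ n)
    (τmin τmax : Equiv.Perm (Fin n))
    (hτmin : ∀ i : Fin n, (τmin i : ℕ) =
      if (i : ℕ) < j - 1 then (i : ℕ)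
      else if (i : ℕ) = j - 1 then j
      else if (i : ℕ) = j then j - 1
      else (i : ℕ))
    (hτmax : ∀ i : Fin n, (τmax i : ℕ) =
      if (i : ℕ) = 0 then j
      else if (i : ℕ) < j then j - 1 - (i : ℕ)
      else if (i : ℕ) < n - 1 then n + j - 1 - (i : ℕ)
      else j - 1) :
    {σ : Equiv.Perm (Fin n) | firstSum σ j ≤ j * (j + 1) / 2 + 1} =
        {σ | BruhatLE 1 σ ∧ BruhatLE σ τmax} ∧
    {σ : Equiv.Perm (Fin n) | j * (j + 1) / 2 + 1 ≤ firstSum σ j} =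
        {σ | BruhatLE τmin σ ∧ BruhatLE σ Fin.revPerm} := by
  have hTs := BruhatAux.tsum_eq j
  constructor
  · ext σ
    simp only [Set.mem_setOf_eq]
    constructor
    · intro hσ
      refine ⟨?_, ?_⟩
      · exact BruhatAux.reach_down (fun _ => True) 1
          (fun σ _ hne => by
            obtain ⟨σ', h⟩ := BruhatAux.exists_cover_down σ hne
            exact ⟨σ', h, trivial⟩) σ trivial
      · refine BruhatAux.reach_up
          (fun σ => firstSum σ j ≤ (∑ i ∈ Finset.range j, (i + 1)) + 1) τmax
          (fun σ hσ' hne => BruhatAux.up_step j hj hjn τmax hτmax σ hne hσ') σ ?_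
        omega
    · rintro ⟨-, h2⟩
      have hf := BruhatAux.bruhatLE_firstSum_le (j := j) h2
      have hm := BruhatAux.firstSum_taumax j hj hjn τmax hτmax
      omega
  · ext σ
    simp only [Set.mem_setOf_eq]
    constructor
    · intro hσ
      refine ⟨?_, ?_⟩
      · refine BruhatAux.reach_down
          (fun σ => (∑ i ∈ Finset.range j, (i + 1)) + 1 ≤ firstSum σ j) τmin
          (fun σ hσ' hne => BruhatAux.down_step j hj hjn τmin hτmin σ hne hσ') σ ?_
        omega
      · exact BruhatAux.reach_up (fun _ => True) Fin.revPerm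
          (fun σ _ hne => by
            obtain ⟨σ', h⟩ := BruhatAux.exists_cover_up σ hne
            exact ⟨σ', h, trivial⟩) σ trivial
    · rintro ⟨h1, -⟩
      have hf := BruhatAux.bruhatLE_firstSum_le (j := j) h1
      have hm := BruhatAux.firstSum_taumin j hj hjn τmin hτmin
      omega
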